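/- Let a > 0. Then for every function φ in H¹(0,∞), one has κ(a) ∫₀^{1/2} φ² dt ≤ ∫₀^∞ (φ')² dt + a² ∫_{1/2}^∞ φ² dt, where κ(a) is the smallest positive root of √κ · tan(√κ/2) = a. -/

import Mathlib

open MeasureTheory Real Set Filter

/-- `κ` is the smallest positive root of `√κ · tan(√κ/2) = a`. -/
def IsSmallestRoot (a κ : ℝ) : Prop :=
  0 < κ ∧ Real.sqrt κ * Real.tan (Real.sqrt κ / 2) = a ∧
    ∀ κ' : ℝ, 0 < κ' → Real.sqrt κ' * Real.tan (Real.sqrt κ' / 2) = a → κ ≤ κ'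

/-- In a set of positive finite length, an integrable function takes a value below any `M`
exceeding its average. -/
lemma exists_pt_lt {f : ℝ → ℝ} {c d M : ℝ} (hcd : c < d)
    (hfi : IntegrableOn f (Ioo c d)) (hM : ∫ t in Ioo c d, f t < M * (d - c)) :
    ∃ t ∈ Ioo c d, f t < M := by
  by_contra h
  push_neg at h
  have h2 := MeasureTheory.setIntegral_ge_of_const_le (measurableSet_Ioo (a := c) (b := d))
    (by simp [Real.volume_Ioo]) h hfi
  rw [Real.volume_real_Ioo_of_le hcd.le, smul_eq_mul] at h2
  linarith

/-- The smallest positive root `κ` satisfies `√κ < π`. -/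
lemma sqrt_lt_pi_of_isSmallestRoot {a κ : ℝ} (ha : 0 < a) (hκ : IsSmallestRoot a κ) :
    Real.sqrt κ < π := by
  obtain ⟨hκpos, hroot, hmin⟩ := hκ
  -- find b close to π with b * tan (b/2) > a
  have h1 : Tendsto (fun x : ℝ => Real.tan (x / 2)) (nhdsWithin π (Iio π)) atTop := by
    apply Real.tendsto_tan_pi_div_two.comp
    rw [tendsto_nhdsWithin_iff]
    constructor
    · have : Tendsto (fun x : ℝ => x / 2) (nhds π) (nhds (π / 2)) :=
        (continuous_id.div_const 2).continuousAt
      exact this.mono_left nhdsWithin_le_nhds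
    · filter_upwards [self_mem_nhdsWithin] with x hx
      have : x < π := hx
      simp only [mem_Iio]
      linarith
  have h2 : ∀ᶠ x in nhdsWithin π (Iio π), Real.tan (x / 2) > 2 * a / π :=
    h1.eventually_gt_atTop _
  have h3 : Ioo (π/2) π ∈ nhdsWithin π (Iio π) :=
    Ioo_mem_nhdsLT_of_mem (right_mem_Ioc.mpr (by linarith [Real.pi_pos]))
  obtain ⟨b, hb1, hb2⟩ := (h2.and (eventually_of_mem h3 (fun x hx => hx))).exists
  -- b * tan (b/2) > a
  have hπ := Real.pi_pos
  have hbtan : a < b * Real.tan (b / 2) := by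
    have htb : 0 < Real.tan (b / 2) := lt_trans (by positivity) hb1
    have : (π/2) * Real.tan (b/2) ≤ b * Real.tan (b/2) :=
      mul_le_mul_of_nonneg_right hb2.1.le htb.le
    have h4 : (π/2) * (2 * a / π) < (π/2) * Real.tan (b/2) := by
      apply mul_lt_mul_of_pos_left hb1 (by positivity)
    have h5 : (π/2) * (2 * a / π) = a := by field_simp
    linarith
  -- find c close to 0 with c * tan (c/2) < a
  have hcont0 : ContinuousAt (fun x : ℝ => x * Real.tan (x / 2)) 0 := by
    apply ContinuousAt.mul continuousAt_id
    exact (Real.continuousAt_tan.mpr (by simp)).comp (continuousAt_id.div_const 2)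
  have h6 : ∀ᶠ x in nhds (0:ℝ), x * Real.tan (x / 2) < a := by
    have := hcont0.eventually_lt_const (by simpa using ha)
    simpa using this
  have h7 : Ioo (0:ℝ) (π/2) ∈ nhdsWithin (0:ℝ) (Ioi 0) :=
    Ioo_mem_nhdsGT_of_mem (left_mem_Ico.mpr (by positivity))
  obtain ⟨c, hc1, hc2⟩ :=
    ((h6.filter_mono nhdsWithin_le_nhds).and (eventually_of_mem h7 (fun x hx => hx))).exists
  -- IVT on [c, b]
  have hcb : c ≤ b := by linarith [hc2.2, hb2.1]
  have hcontOn : ContinuousOn (fun x : ℝ => x * Real.tan (x / 2)) (Icc c b) := by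
    intro x hx
    apply ContinuousAt.continuousWithinAt
    have hcos : Real.cos (x / 2) ≠ 0 := by
      apply ne_of_gt
      apply Real.cos_pos_of_mem_Ioo
      constructor
      · linarith [hc2.1, hx.1]
      · linarith [hb2.2, hx.2]
    exact ContinuousAt.mul continuousAt_id
      (ContinuousAt.comp (x := x) (f := fun y : ℝ => y / 2)
        (Real.continuousAt_tan.mpr hcos) (continuousAt_id.div_const 2))
  have hmem : a ∈ Icc (c * Real.tan (c/2)) (b * Real.tan (b/2)) := ⟨hc1.le, hbtan.le⟩
  obtain ⟨x, hx, hxa⟩ := intermediate_value_Icc hcb hcontOn hmem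
  have hx0 : 0 < x := lt_of_lt_of_le hc2.1 hx.1
  have hxπ : x < π := lt_of_le_of_lt hx.2 hb2.2
  have hsq : Real.sqrt (x ^ 2) = x := Real.sqrt_sq hx0.le
  have hle : κ ≤ x ^ 2 := hmin (x ^ 2) (by positivity) (by rw [hsq]; exact hxa)
  calc Real.sqrt κ ≤ Real.sqrt (x ^ 2) := Real.sqrt_le_sqrt hle
    _ = x := hsq
    _ < π := hxπ

/-- Poincaré–Friedrichs inequality on the half line. -/
theorem stmt0 (a κ : ℝ) (ha : 0 < a) (hκ : IsSmallestRoot a κ)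
    (φ : ℝ → ℝ) (hdiff : ∀ t ∈ Ioi (0:ℝ), DifferentiableAt ℝ φ t)
    (hφ2 : IntegrableOn (fun t => φ t ^ 2) (Ioi 0))
    (hφ'2 : IntegrableOn (fun t => deriv φ t ^ 2) (Ioi 0)) :
    κ * ∫ t in Ioo (0:ℝ) (1/2), φ t ^ 2 ≤
      (∫ t in Ioi (0:ℝ), deriv φ t ^ 2) + a ^ 2 * ∫ t in Ioi (1/2 : ℝ), φ t ^ 2 := by
  have hωπ : Real.sqrt κ < π := sqrt_lt_pi_of_isSmallestRoot ha hκ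
  obtain ⟨hκpos, hroot, hmin⟩ := hκ
  set ω := Real.sqrt κ with hωdef
  have hωpos : 0 < ω := Real.sqrt_pos.mpr hκpos
  have hωsq : ω ^ 2 = κ := Real.sq_sqrt hκpos.le
  have hπ := Real.pi_pos
  have hcos : ∀ t : ℝ, 0 ≤ t → t ≤ 1/2 → 0 < Real.cos (ω * t) := by
    intro t h0 h1
    apply Real.cos_pos_of_mem_Ioo
    constructor
    · have : 0 ≤ ω * t := mul_nonneg hωpos.le h0
      linarith
    · nlinarith [mul_le_mul_of_nonneg_left h1 hωpos.le]
  -- the key inequality for truncated intervals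
  have key : ∀ ε, 0 < ε → ε < 1/2 → ∀ T, 1/2 < T →
      κ * ∫ t in Ioo ε (1/2 : ℝ), φ t ^ 2 ≤
        (∫ t in Ioi (0:ℝ), deriv φ t ^ 2) + a ^ 2 * (∫ t in Ioi (1/2:ℝ), φ t ^ 2)
          + a * φ T ^ 2 := by
    intro ε hε0 hε T hT
    set F₁ : ℝ → ℝ := fun t => -(ω * Real.tan (ω * t)) * φ t ^ 2 with hF₁
    set F₂ : ℝ → ℝ := fun t => -a * φ t ^ 2 with hF₂
    set G1 : ℝ → ℝ := fun x => -(ω * (1 / Real.cos (ω * x) ^ 2 * ω)) * φ x ^ 2 +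
      -(ω * Real.tan (ω * x)) * (2 * φ x * deriv φ x) with hG1
    set G2 : ℝ → ℝ := fun x => -a * (2 * φ x * deriv φ x) with hG2
    have hsub1 : Icc ε (1/2 : ℝ) ⊆ Ioi 0 := fun x hx => lt_of_lt_of_le hε0 hx.1
    have hsub2 : Icc (1/2 : ℝ) T ⊆ Ioi 0 := fun x hx => lt_of_lt_of_le (by norm_num) hx.1
    have int1 : IntegrableOn (fun t => deriv φ t ^ 2 - κ * φ t ^ 2) (Icc ε (1/2)) :=
      (hφ'2.mono_set hsub1).sub ((hφ2.mono_set hsub1).const_mul κ)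
    have int2 : IntegrableOn (fun t => deriv φ t ^ 2 + a ^ 2 * φ t ^ 2) (Icc (1/2) T) :=
      (hφ'2.mono_set hsub2).add ((hφ2.mono_set hsub2).const_mul (a^2))
    have I1 : F₁ (1/2) - F₁ ε ≤ ∫ y in ε..(1/2 : ℝ), (deriv φ y ^ 2 - κ * φ y ^ 2) := by
      refine intervalIntegral.sub_le_integral_of_hasDeriv_right_of_le (g' := G1)
        hε.le ?_ ?_ int1 ?_
      · -- continuity of F₁ on Icc
        apply ContinuousOn.mul
        · apply ContinuousOn.neg
          apply ContinuousOn.mul continuousOn_const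
          intro x hx
          have hc := hcos x (le_trans hε0.le hx.1) hx.2
          exact (ContinuousAt.comp (x := x) (f := fun y : ℝ => ω * y)
            (Real.continuousAt_tan.mpr hc.ne') (continuousAt_const.mul continuousAt_id)).continuousWithinAt
        · intro x hx
          exact (((hdiff x (hsub1 hx)).continuousAt).pow 2).continuousWithinAt
      · -- derivative of F₁ on Ioo
        intro x hx
        have hx0 : 0 < x := lt_trans hε0 hx.1
        have hc := hcos x hx0.le hx.2.le
        have h1 : HasDerivAt (fun t : ℝ => ω * t) ω x := by
          simpa using (hasDerivAt_id x).const_mul ω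
        have ht : HasDerivAt (fun t => Real.tan (ω * t)) (1 / Real.cos (ω * x) ^ 2 * ω) x :=
          (Real.hasDerivAt_tan hc.ne').comp x h1
        have h2 : HasDerivAt (fun t => -(ω * Real.tan (ω * t)))
            (-(ω * (1 / Real.cos (ω * x) ^ 2 * ω))) x := (ht.const_mul ω).neg
        have h3 : HasDerivAt (fun t => φ t ^ 2) ((2:ℕ) * φ x ^ (2-1) * deriv φ x) x :=
          ((hdiff x hx0).hasDerivAt).pow 2
        have h4 := (h2.mul h3).hasDerivWithinAt (s := Ioi x)
        have : F₁ = fun t => -(ω * Real.tan (ω * t)) * φ t ^ 2 := hF₁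
        rw [this, hG1]
        refine h4.congr_deriv ?_
        push_cast
        ring
      · -- pointwise comparison
        intro x hx
        have hx0 : 0 < x := lt_trans hε0 hx.1
        have hc := hcos x hx0.le hx.2.le
        have hid : 1 / Real.cos (ω * x) ^ 2 = Real.tan (ω * x) ^ 2 + 1 := by
          rw [Real.tan_eq_sin_div_cos]
          have hsc := Real.sin_sq_add_cos_sq (ω * x)
          field_simp
          linarith [hsc]
        rw [hG1]
        simp only
        rw [hid, ← hωsq]
        nlinarith [sq_nonneg (deriv φ x + ω * Real.tan (ω * x) * φ x)]
    have I2 : F₂ T - F₂ (1/2) ≤ ∫ y in (1/2:ℝ)..T, (deriv φ y ^ 2 + a ^ 2 * φ y ^ 2) := by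
      refine intervalIntegral.sub_le_integral_of_hasDeriv_right_of_le (g' := G2)
        hT.le ?_ ?_ int2 ?_
      · intro x hx
        exact ((((hdiff x (hsub2 hx)).continuousAt).pow 2).const_smul (-a)).continuousWithinAt
      · intro x hx
        have hx0 : 0 < x := lt_trans (by norm_num) hx.1
        have h3 : HasDerivAt (fun t => φ t ^ 2) ((2:ℕ) * φ x ^ (2-1) * deriv φ x) x :=
          ((hdiff x hx0).hasDerivAt).pow 2
        have h4 := (h3.const_mul (-a)).hasDerivWithinAt (s := Ioi x)
        rw [hF₂, hG2]
        refine h4.congr_deriv ?_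
        push_cast
        ring
      · intro x hx
        rw [hG2]
        simp only
        nlinarith [sq_nonneg (deriv φ x + a * φ x)]
    -- endpoint values
    have hF1ε : F₁ ε ≤ 0 := by
      have htn : 0 ≤ Real.tan (ω * ε) := by
        apply Real.tan_nonneg_of_nonneg_of_le_pi_div_two (by positivity)
        nlinarith [mul_le_mul_of_nonneg_left hε.le hωpos.le]
      rw [hF₁]
      simp only
      nlinarith [sq_nonneg (φ ε), mul_nonneg hωpos.le htn]
    have hF1half : F₁ (1/2) = F₂ (1/2) := by
      rw [hF₁, hF₂]
      simp only
      rw [show ω * (1/2 : ℝ) = ω / 2 by ring, hroot]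
    -- interval integrability
    have ii1 : IntervalIntegrable (fun t => deriv φ t ^ 2) volume ε (1/2) := by
      rw [intervalIntegrable_iff, uIoc_of_le hε.le]
      exact hφ'2.mono_set (fun x hx => lt_trans hε0 hx.1)
    have ii2 : IntervalIntegrable (fun t => φ t ^ 2) volume ε (1/2) := by
      rw [intervalIntegrable_iff, uIoc_of_le hε.le]
      exact hφ2.mono_set (fun x hx => lt_trans hε0 hx.1)
    have ii3 : IntervalIntegrable (fun t => deriv φ t ^ 2) volume (1/2) T := by
      rw [intervalIntegrable_iff, uIoc_of_le hT.le]
      exact hφ'2.mono_set (fun x hx => lt_trans (by norm_num) hx.1)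
    have ii4 : IntervalIntegrable (fun t => φ t ^ 2) volume (1/2) T := by
      rw [intervalIntegrable_iff, uIoc_of_le hT.le]
      exact hφ2.mono_set (fun x hx => lt_trans (by norm_num) hx.1)
    have E1 : ∫ y in ε..(1/2:ℝ), (deriv φ y ^ 2 - κ * φ y ^ 2)
        = (∫ y in ε..(1/2:ℝ), deriv φ y ^ 2) - κ * ∫ y in ε..(1/2:ℝ), φ y ^ 2 := by
      rw [intervalIntegral.integral_sub ii1 (ii2.const_mul κ),
        intervalIntegral.integral_const_mul]
    have E2 : ∫ y in (1/2:ℝ)..T, (deriv φ y ^ 2 + a ^ 2 * φ y ^ 2)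
        = (∫ y in (1/2:ℝ)..T, deriv φ y ^ 2) + a ^ 2 * ∫ y in (1/2:ℝ)..T, φ y ^ 2 := by
      rw [intervalIntegral.integral_add ii3 (ii4.const_mul (a^2)),
        intervalIntegral.integral_const_mul]
    -- bounds for the integrals
    have bd1 : (∫ y in ε..(1/2:ℝ), deriv φ y ^ 2) + (∫ y in (1/2:ℝ)..T, deriv φ y ^ 2)
        ≤ ∫ t in Ioi (0:ℝ), deriv φ t ^ 2 := by
      rw [intervalIntegral.integral_of_le hε.le, intervalIntegral.integral_of_le hT.le]
      have hu : Ioc ε (1/2:ℝ) ∪ Ioc (1/2:ℝ) T = Ioc ε T := Ioc_union_Ioc_eq_Ioc hε.le hT.le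
      rw [← MeasureTheory.setIntegral_union (Set.Ioc_disjoint_Ioc_of_le le_rfl) measurableSet_Ioc
        (hφ'2.mono_set (fun x hx => lt_trans hε0 hx.1))
        (hφ'2.mono_set (fun x hx => lt_trans (by norm_num) hx.1)), hu]
      apply MeasureTheory.setIntegral_mono_set hφ'2
      · filter_upwards with x using sq_nonneg _
      · exact HasSubset.Subset.eventuallyLE (fun x hx => lt_trans hε0 hx.1)
    have bd2 : (∫ y in (1/2:ℝ)..T, φ y ^ 2) ≤ ∫ t in Ioi (1/2:ℝ), φ t ^ 2 := by
      rw [intervalIntegral.integral_of_le hT.le]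
      apply MeasureTheory.setIntegral_mono_set
        (hφ2.mono_set (Ioi_subset_Ioi (by norm_num)))
      · filter_upwards with x using sq_nonneg _
      · exact HasSubset.Subset.eventuallyLE Ioc_subset_Ioi_self
    -- assemble
    have hchain : -a * φ T ^ 2 ≤
        ((∫ y in ε..(1/2:ℝ), deriv φ y ^ 2) - κ * ∫ y in ε..(1/2:ℝ), φ y ^ 2) +
        ((∫ y in (1/2:ℝ)..T, deriv φ y ^ 2) + a ^ 2 * ∫ y in (1/2:ℝ)..T, φ y ^ 2) := by
      have h5 : F₂ T = -a * φ T ^ 2 := rfl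
      rw [E1] at I1
      rw [E2] at I2
      linarith [I1, I2, hF1ε, hF1half.le, hF1half.ge]
    have hIoo : ∫ y in ε..(1/2:ℝ), φ y ^ 2 = ∫ t in Ioo ε (1/2:ℝ), φ t ^ 2 := by
      rw [intervalIntegral.integral_of_le hε.le, MeasureTheory.integral_Ioc_eq_integral_Ioo]
    rw [← hIoo]
    have hbd2' : a ^ 2 * (∫ y in (1/2:ℝ)..T, φ y ^ 2) ≤ a ^ 2 * ∫ t in Ioi (1/2:ℝ), φ t ^ 2 :=
      mul_le_mul_of_nonneg_left bd2 (sq_nonneg a)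
    linarith [hchain, bd1, hbd2']
  -- choose a sequence T n → ∞ along which φ² is small
  set I : ℕ → ℝ := fun n => ∫ t in Ioo ((n:ℝ)+1) ((n:ℝ)+2), φ t ^ 2 with hI
  have hint1 : IntegrableOn (fun t => φ t ^ 2) (Ioi 1) :=
    hφ2.mono_set (Ioi_subset_Ioi (by norm_num))
  have hb1 : Tendsto (fun n : ℕ => (n:ℝ)+1) atTop atTop :=
    tendsto_atTop_add_const_right atTop 1 tendsto_natCast_atTop_atTop
  have hb2 : Tendsto (fun n : ℕ => (n:ℝ)+2) atTop atTop :=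
    tendsto_atTop_add_const_right atTop 2 tendsto_natCast_atTop_atTop
  have hA1 := MeasureTheory.intervalIntegral_tendsto_integral_Ioi (f := fun t => φ t ^ 2)
    (μ := volume) 1 hint1 hb1
  have hA2 := MeasureTheory.intervalIntegral_tendsto_integral_Ioi (f := fun t => φ t ^ 2)
    (μ := volume) 1 hint1 hb2
  have hIn : Tendsto I atTop (nhds 0) := by
    have hdiffI : ∀ n : ℕ, I n = (∫ x in (1:ℝ)..((n:ℝ)+2), φ x ^ 2)
        - ∫ x in (1:ℝ)..((n:ℝ)+1), φ x ^ 2 := by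
      intro n
      have ja : IntervalIntegrable (fun t => φ t ^ 2) volume 1 ((n:ℝ)+2) := by
        rw [intervalIntegrable_iff, uIoc_of_le (by linarith [n.cast_nonneg (α := ℝ)] : (1:ℝ) ≤ (n:ℝ)+2)]
        exact hφ2.mono_set (fun x hx => lt_trans (by norm_num) hx.1)
      have jb : IntervalIntegrable (fun t => φ t ^ 2) volume 1 ((n:ℝ)+1) := by
        rw [intervalIntegrable_iff, uIoc_of_le (by linarith [n.cast_nonneg (α := ℝ)] : (1:ℝ) ≤ (n:ℝ)+1)]
        exact hφ2.mono_set (fun x hx => lt_trans (by norm_num) hx.1)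
      rw [intervalIntegral.integral_interval_sub_left ja jb,
        intervalIntegral.integral_of_le (by linarith : ((n:ℝ)+1) ≤ (n:ℝ)+2),
        MeasureTheory.integral_Ioc_eq_integral_Ioo]
    have := hA2.sub hA1
    rw [sub_self] at this
    exact this.congr (fun n => (hdiffI n).symm)
  have hTn : ∀ n : ℕ, ∃ t ∈ Ioo ((n:ℝ)+1) ((n:ℝ)+2), φ t ^ 2 < I n + 1/((n:ℝ)+1) := by
    intro n
    apply exists_pt_lt (by linarith [n.cast_nonneg (α := ℝ)])
      (hφ2.mono_set (fun x hx => lt_trans (by positivity) hx.1))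
    have h1 : (0:ℝ) < 1/((n:ℝ)+1) := by positivity
    have h2 : ((n:ℝ)+2) - ((n:ℝ)+1) = 1 := by ring
    rw [h2, mul_one]
    simp only [hI]
    linarith
  choose T hTmem hTlt using hTn
  have hφT0 : Tendsto (fun n => φ (T n) ^ 2) atTop (nhds 0) := by
    apply squeeze_zero (fun n => sq_nonneg _) (fun n => (hTlt n).le)
    have h0 : Tendsto (fun n : ℕ => 1/((n:ℝ)+1)) atTop (nhds 0) :=
      tendsto_one_div_add_atTop_nhds_zero_nat
    simpa using hIn.add h0
  -- take the limit in T for fixed ε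
  have main2 : ∀ ε, 0 < ε → ε < 1/2 →
      κ * ∫ t in Ioo ε (1/2:ℝ), φ t ^ 2 ≤
        (∫ t in Ioi (0:ℝ), deriv φ t ^ 2) + a ^ 2 * ∫ t in Ioi (1/2:ℝ), φ t ^ 2 := by
    intro ε h1 h2
    have hlim : Tendsto (fun n => (∫ t in Ioi (0:ℝ), deriv φ t ^ 2)
        + a ^ 2 * (∫ t in Ioi (1/2:ℝ), φ t ^ 2) + a * φ (T n) ^ 2) atTop
        (nhds ((∫ t in Ioi (0:ℝ), deriv φ t ^ 2) + a ^ 2 * ∫ t in Ioi (1/2:ℝ), φ t ^ 2)) := by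
      have h := Tendsto.add (tendsto_const_nhds
        (x := ((∫ t in Ioi (0:ℝ), deriv φ t ^ 2) + a ^ 2 * ∫ t in Ioi (1/2:ℝ), φ t ^ 2)))
        (hφT0.const_mul a)
      simpa using h
    apply ge_of_tendsto hlim
    filter_upwards with n
    apply key ε h1 h2 (T n)
    have := (hTmem n).1
    have := n.cast_nonneg (α := ℝ)
    linarith
  -- take the limit ε → 0
  have hmono : Monotone (fun m : ℕ => Ioo (1/((m:ℝ)+3)) (1/2:ℝ)) := by
    intro i j hij
    apply Ioo_subset_Ioo _ le_rfl
    apply one_div_le_one_div_of_le (by positivity)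
    have : (i:ℝ) ≤ (j:ℝ) := Nat.cast_le.mpr hij
    linarith
  have hunion : (⋃ m : ℕ, Ioo (1/((m:ℝ)+3)) (1/2:ℝ)) = Ioo 0 (1/2:ℝ) := by
    ext x
    simp only [mem_iUnion, mem_Ioo]
    constructor
    · rintro ⟨m, h1, h2⟩
      exact ⟨lt_trans (by positivity) h1, h2⟩
    · rintro ⟨h1, h2⟩
      obtain ⟨m, hm⟩ := exists_nat_one_div_lt h1
      refine ⟨m, lt_of_le_of_lt ?_ hm, h2⟩
      apply one_div_le_one_div_of_le (by positivity)
      linarith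
  have hlim2 : Tendsto (fun m : ℕ => κ * ∫ t in Ioo (1/((m:ℝ)+3)) (1/2:ℝ), φ t ^ 2) atTop
      (nhds (κ * ∫ t in Ioo (0:ℝ) (1/2), φ t ^ 2)) := by
    apply Tendsto.const_mul
    have h := MeasureTheory.tendsto_setIntegral_of_monotone
      (fun m : ℕ => measurableSet_Ioo) hmono
      (by rw [hunion]; exact hφ2.mono_set (fun x hx => hx.1))
    rwa [hunion] at h
  apply le_of_tendsto hlim2
  filter_upwards with m
  apply main2
  · positivity
  · rw [div_lt_div_iff₀ (by positivity) (by norm_num : (0:ℝ) < 2)]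
    have h0 : (0:ℝ) ≤ (m:ℝ) := m.cast_nonneg
    linarith
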